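/- Let k be a field and let C be the divided power coalgebra over k: the free k-module with basis (γ_n)_{n≥0}, comultiplication Δ(γ_n) = Σ_{i+j=n} γ_i ⊗ γ_j, and counit ε(γ_n) = δ_{n,0}. Define the k-linear map f : C ⊗ C → C ⊗ C by f(γ_i ⊗ γ_j) = γ_{i-1} ⊗ γ_j − γ_i ⊗ γ_{j-1}, with the convention γ_{-1} = 0. Then 0 → C →^{Δ} C ⊗ C →^{f} C ⊗ C → 0 is a short exact sequence of k-modules: Δ is injective, the kernel of f equals the image of Δ, and f is surjective. -/

import Mathlib

open scoped TensorProduct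

noncomputable section

/-- The underlying module of the divided power coalgebra over `k`: the free `k`-module with
basis `(γ_n)_{n ≥ 0}`, realized as finitely supported functions `ℕ →₀ k`
(so `γ_n = Finsupp.single n 1`). -/
abbrev DividedPowers' (k : Type*) [Field k] : Type _ := ℕ →₀ k

variable (k : Type*) [Field k]

/-- `γ_n = Finsupp.single n 1`, the `n`-th basis element of the divided power coalgebra. -/
def gamma (n : ℕ) : DividedPowers' k := Finsupp.single n 1

/-- The comultiplication of the divided power coalgebra:
`Δ(γ_n) = Σ_{i+j=n} γ_i ⊗ γ_j`. -/
def dpComul : DividedPowers' k →ₗ[k] (DividedPowers' k) ⊗[k] (DividedPowers' k) :=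
  Finsupp.lsum k fun n =>
    LinearMap.toSpanSingleton k _
      (∑ p ∈ Finset.HasAntidiagonal.antidiagonal n, gamma k p.1 ⊗ₜ[k] gamma k p.2)

/-- The counit of the divided power coalgebra: `ε(γ_n) = δ_{n,0}`, i.e. `ε(f) = f 0`. -/
def dpCounit : DividedPowers' k →ₗ[k] k := Finsupp.lapply 0

/-- The "shift down" map `γ_i ↦ γ_{i-1}` (with the convention `γ_{-1} = 0`). -/
def dpDown : DividedPowers' k →ₗ[k] DividedPowers' k :=
  Finsupp.lsum k fun n =>
    match n with
    | 0 => 0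
    | m + 1 => LinearMap.toSpanSingleton k _ (gamma k m)

/-- The map `f : C ⊗ C → C ⊗ C`, `f(γ_i ⊗ γ_j) = γ_{i-1} ⊗ γ_j − γ_i ⊗ γ_{j-1}`
(with `γ_{-1} = 0`). -/
def dpF : (DividedPowers' k) ⊗[k] (DividedPowers' k) →ₗ[k]
    (DividedPowers' k) ⊗[k] (DividedPowers' k) :=
  TensorProduct.map (dpDown k) (LinearMap.id (R := k) (M := DividedPowers' k)) +
    TensorProduct.map (LinearMap.id (R := k) (M := DividedPowers' k)) (-(dpDown k))

-- Auxiliary lemmas ------------------------------------------------------------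

lemma phiT_sub (a b : (DividedPowers' k) ⊗[k] (DividedPowers' k)) :
    finsuppTensorFinsupp' k ℕ ℕ (a - b)
      = finsuppTensorFinsupp' k ℕ ℕ a - finsuppTensorFinsupp' k ℕ ℕ b :=
  (finsuppTensorFinsupp' k ℕ ℕ).toLinearMap.map_sub a b

lemma phiT_sum {α : Type*} (s : Finset α) (g : α → (DividedPowers' k) ⊗[k] (DividedPowers' k)) :
    finsuppTensorFinsupp' k ℕ ℕ (∑ p ∈ s, g p) = ∑ p ∈ s, finsuppTensorFinsupp' k ℕ ℕ (g p) :=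
  map_sum (finsuppTensorFinsupp' k ℕ ℕ).toLinearMap g s

lemma dpDown_apply (x : DividedPowers' k) (i : ℕ) : dpDown k x i = x (i + 1) := by
  have h : ((Finsupp.lapply i).comp (dpDown k) : DividedPowers' k →ₗ[k] k)
      = Finsupp.lapply (i + 1) := by
    ext n
    rcases n with _ | m <;>
      simp [dpDown, Finsupp.lsum_single, LinearMap.toSpanSingleton_apply, gamma,
        Finsupp.single_apply]
  exact DFunLike.congr_fun h x

lemma dpDown_gamma_zero : dpDown k (gamma k 0) = 0 := by
  ext i
  simp [dpDown_apply, gamma, Finsupp.single_apply]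

lemma dpDown_gamma_succ (m : ℕ) : dpDown k (gamma k (m + 1)) = gamma k m := by
  ext i
  simp [dpDown_apply, gamma, Finsupp.single_apply]

lemma dpF_tmul (x y : DividedPowers' k) :
    dpF k (x ⊗ₜ[k] y) = (dpDown k x) ⊗ₜ[k] y - x ⊗ₜ[k] (dpDown k y) := by
  simp [dpF, sub_eq_add_neg, TensorProduct.tmul_neg]

lemma coeff_F (t : (DividedPowers' k) ⊗[k] (DividedPowers' k)) (i j : ℕ) :
    finsuppTensorFinsupp' k ℕ ℕ (dpF k t) (i, j)
      = finsuppTensorFinsupp' k ℕ ℕ t (i + 1, j) - finsuppTensorFinsupp' k ℕ ℕ t (i, j + 1) := by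
  have h : (Finsupp.lapply (i, j) ∘ₗ ((finsuppTensorFinsupp' k ℕ ℕ).toLinearMap ∘ₗ dpF k) :
        (DividedPowers' k) ⊗[k] (DividedPowers' k) →ₗ[k] k)
      = Finsupp.lapply (i + 1, j) ∘ₗ (finsuppTensorFinsupp' k ℕ ℕ).toLinearMap
        - Finsupp.lapply (i, j + 1) ∘ₗ (finsuppTensorFinsupp' k ℕ ℕ).toLinearMap := by
    ext x y
    simp [dpF_tmul, phiT_sub, finsuppTensorFinsupp'_apply_apply, dpDown_apply,
      Finsupp.sub_apply, Finsupp.single_apply, Prod.ext_iff, ite_and, mul_ite, ite_mul,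
      mul_one, one_mul, mul_zero, zero_mul]
    split_ifs <;> simp
  exact DFunLike.congr_fun h t

lemma coeff_comul (u : DividedPowers' k) (i j : ℕ) :
    finsuppTensorFinsupp' k ℕ ℕ (dpComul k u) (i, j) = u (i + j) := by
  have h : (Finsupp.lapply (i, j) ∘ₗ ((finsuppTensorFinsupp' k ℕ ℕ).toLinearMap ∘ₗ dpComul k) :
        DividedPowers' k →ₗ[k] k) = Finsupp.lapply (i + j) := by
    ext n
    simp only [LinearMap.comp_apply, Finsupp.lapply_apply, LinearEquiv.coe_coe,
      Finsupp.lsingle_apply, LinearMap.coe_comp, Function.comp_apply,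
      dpComul, Finsupp.lsum_single, LinearMap.toSpanSingleton_apply, one_smul]
    rw [phiT_sum, Finsupp.finset_sum_apply]
    simp only [LinearEquiv.coe_coe, gamma, finsuppTensorFinsupp'_single_tmul_single, mul_one]
    rw [Finset.sum_congr rfl
      (fun p _ => by rw [Finsupp.single_apply, Prod.mk.eta])]
    rw [Finset.sum_ite_eq' (Finset.HasAntidiagonal.antidiagonal n) ((i, j) : ℕ × ℕ) (fun _ => (1 : k))]
    simp [Finsupp.single_apply, Finset.mem_antidiagonal, eq_comm]
  exact DFunLike.congr_fun h u

/-- For the divided power coalgebra `C` over a field `k`, the sequence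
`0 → C →^Δ C ⊗ C →^f C ⊗ C → 0` is a short exact sequence of `k`-modules:
`Δ` is injective, `ker f = range Δ`, and `f` is surjective. -/
theorem dividedPowers_shortExact :
    Function.Injective (dpComul k) ∧
      LinearMap.ker (dpF k) = LinearMap.range (dpComul k) ∧
      Function.Surjective (dpF k) := by
  have hphi0 := (finsuppTensorFinsupp' k ℕ ℕ).map_zero
  refine ⟨?_, ?_, ?_⟩
  · -- injectivity of Δ
    intro u v huv
    ext n
    have h1 := coeff_comul k u n 0
    have h2 := coeff_comul k v n 0
    rw [huv, h2] at h1
    exact h1.symm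
  · -- ker f = range Δ
    apply le_antisymm
    · intro t ht
      rw [LinearMap.mem_ker] at ht
      have key : ∀ j i : ℕ, finsuppTensorFinsupp' k ℕ ℕ t (i, j)
          = finsuppTensorFinsupp' k ℕ ℕ t (i + j, 0) := by
        intro j
        induction j with
        | zero => intro i; simp
        | succ j ih =>
          intro i
          have h1 := coeff_F k t i j
          rw [ht, hphi0] at h1
          have h2 : finsuppTensorFinsupp' k ℕ ℕ t (i, j + 1)
              = finsuppTensorFinsupp' k ℕ ℕ t (i + 1, j) := by
            have h3 := h1.symm
            simp only [Finsupp.coe_zero, Pi.zero_apply] at h3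
            exact (sub_eq_zero.mp h3).symm
          rw [h2, ih (i + 1)]
          congr 2
          omega
      refine ⟨Finsupp.comapDomain (fun n => ((n, 0) : ℕ × ℕ))
        (finsuppTensorFinsupp' k ℕ ℕ t)
        (show Set.InjOn (fun n => ((n, 0) : ℕ × ℕ)) _ from by
          intro a _ b _ hab; simpa using congrArg Prod.fst hab), ?_⟩
      apply (finsuppTensorFinsupp' k ℕ ℕ).injective
      ext p
      obtain ⟨i, j⟩ := p
      rw [coeff_comul, Finsupp.comapDomain_apply, key j i]
    · rintro t ⟨u, rfl⟩
      rw [LinearMap.mem_ker]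
      apply (finsuppTensorFinsupp' k ℕ ℕ).injective
      rw [hphi0]
      ext p
      obtain ⟨i, j⟩ := p
      rw [coeff_F, coeff_comul, coeff_comul]
      simp only [Finsupp.coe_zero, Pi.zero_apply]
      rw [show i + 1 + j = i + (j + 1) from by omega, sub_self]
  · -- surjectivity of f
    have hgen : ∀ j i : ℕ, ∃ t, dpF k t = gamma k i ⊗ₜ[k] gamma k j := by
      intro j
      induction j with
      | zero =>
        intro i
        refine ⟨gamma k (i + 1) ⊗ₜ[k] gamma k 0, ?_⟩
        rw [dpF_tmul, dpDown_gamma_succ, dpDown_gamma_zero]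
        simp [TensorProduct.tmul_zero]
      | succ j ih =>
        intro i
        obtain ⟨t', ht'⟩ := ih (i + 1)
        refine ⟨gamma k (i + 1) ⊗ₜ[k] gamma k (j + 1) + t', ?_⟩
        rw [(dpF k).map_add, ht', dpF_tmul, dpDown_gamma_succ, dpDown_gamma_succ]
        exact sub_add_cancel _ _
    rw [← LinearMap.range_eq_top, eq_top_iff,
      ← (Module.Basis.tensorProduct (Finsupp.basisSingleOne (R := k) (ι := ℕ))
        (Finsupp.basisSingleOne (R := k) (ι := ℕ))).span_eq, Submodule.span_le]
    rintro x ⟨⟨i, j⟩, rfl⟩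
    obtain ⟨t, ht⟩ := hgen j i
    refine ⟨t, ?_⟩
    rw [ht, Module.Basis.tensorProduct_apply]
    simp [gamma]

end
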